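/- For any matroid M on a finite set S and any subset U ⊆ S, the following inequalities hold in the rank-preserving weak order on matroids on S: M|U ⊕ M/U ≤ M ≤ M|U □ M/U, where M|U is the restriction to U, M/U is the contraction by U, ⊕ is direct sum, and □ is free product. -/

import Mathlib

open Matroid

variable {α : Type*}

/-- The contraction `M / C` of a matroid by a set, defined as the dual of the
deletion (restriction to the complement) of the dual. Its ground set is `M.E \ C`. -/
def Matroid.con (M : Matroid α) (C : Set α) : Matroid α := (M✶ ↾ (M.E \ C))✶

/-- The rank `ρ(M)` of a matroid (as a value in `ℕ∞`): the common cardinality of its bases. -/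
noncomputable def Matroid.erank (M : Matroid α) : ℕ∞ := ⨆ B ∈ {B | M.IsBase B}, B.encard

/-- The rank function `ρ_M(X)` of a matroid: the rank of the restriction to `X`. -/
noncomputable def Matroid.rnk (M : Matroid α) (X : Set α) : ℕ∞ := (M ↾ X).erank

/-- `IsFreeProduct M N P` says that `P` is the free product `M □ N`: its ground set is
`M.E ∪ N.E`, and its bases are exactly the sets `B ⊆ M.E ∪ N.E` of cardinality
`ρ(M) + ρ(N)` such that `B ∩ M.E` is independent in `M` and `B ∩ N.E` spans `N`. -/
def IsFreeProduct (M N P : Matroid α) : Prop :=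
  P.E = M.E ∪ N.E ∧ ∀ B : Set α,
    (P.IsBase B ↔ B ⊆ M.E ∪ N.E ∧ B.encard = M.erank + N.erank ∧
      M.Indep (B ∩ M.E) ∧ N.Spanning (B ∩ N.E))

/-- The rank-preserving weak order on matroids: `M ≤ N` iff `M` and `N` have the same
ground set and every base of `M` is a base of `N`. -/
def weakLE (M N : Matroid α) : Prop := M.E = N.E ∧ ∀ B, M.IsBase B → N.IsBase B

open Set

@[simp] lemma con_ground' (M : Matroid α) (U : Set α) : (M.con U).E = M.E \ U := rfl

lemma erank_eq_of_base' {M : Matroid α} {B : Set α} (hB : M.IsBase B) : M.erank = B.encard := by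
  refine le_antisymm (iSup₂_le fun B' hB' => (Matroid.IsBase.encard_eq_encard_of_isBase hB' hB).le) ?_
  exact le_iSup₂ (f := fun B' _ => B'.encard) B hB

lemma con_base_iff' {M : Matroid α} {U K : Set α} :
    (M.con U).IsBase K ↔ K ⊆ M.E \ U ∧ M✶.IsBasis ((M.E \ U) \ K) (M.E \ U) := by
  rw [Matroid.con, dual_isBase_iff']
  have h1 : (M✶ ↾ (M.E \ U)).E = M.E \ U := rfl
  rw [h1, isBase_restrict_iff (show M.E \ U ⊆ M✶.E from diff_subset), and_comm]

lemma base_union_of_basis_basis' {M : Matroid α} {U I K : Set α} (hU : U ⊆ M.E)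
    (hI : M.IsBasis I U) (hK : K ⊆ M.E \ U) (hJ : M✶.IsBasis ((M.E \ U) \ K) (M.E \ U)) :
    M.IsBase (I ∪ K) := by
  have hIU : I ⊆ U := hI.subset
  have hKE : K ⊆ M.E := hK.trans diff_subset
  set J := (M.E \ U) \ K with hJdef
  have hUK : U ∪ K = M.E \ J := by
    ext x
    simp only [hJdef, mem_union, mem_diff]
    constructor
    · rintro (h | h)
      · exact ⟨hU h, fun h' => h'.1.2 h⟩
      · exact ⟨hKE h, fun h' => h'.2 h⟩
    · rintro ⟨hx, h⟩
      by_cases hxU : x ∈ U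
      · exact Or.inl hxU
      · exact Or.inr (by_contra fun hxK => h ⟨⟨hx, hxU⟩, hxK⟩)
  have hspan : M.Spanning (I ∪ K) := by
    have hUKs : M.Spanning (U ∪ K) := by
      rw [hUK, ← coindep_iff_compl_spanning (M := M) (hI := hJ.indep.subset_ground)]
      exact hJ.indep
    rw [spanning_iff_closure_eq]
    have : M.closure (I ∪ K) = M.closure (U ∪ K) := by
      rw [← closure_union_closure_left_eq, hI.closure_eq_closure,
        closure_union_closure_left_eq]
    rw [this, hUKs.closure_eq]
  have hcompl : M.E \ (I ∪ K) = (U \ I) ∪ J := by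
    ext x
    simp only [hJdef, mem_diff, mem_union]
    constructor
    · rintro ⟨hx, h⟩
      push_neg at h
      by_cases hxU : x ∈ U
      · exact Or.inl ⟨hxU, h.1⟩
      · exact Or.inr ⟨⟨hx, hxU⟩, h.2⟩
    · rintro (⟨hxU, hxI⟩ | ⟨⟨hx, hxU⟩, hxK⟩)
      · exact ⟨hU hxU, fun h => h.elim hxI (fun hk => (hK hk).2 hxU)⟩
      · exact ⟨hx, fun h => h.elim (fun hi => hxU (hIU hi)) hxK⟩
  have hindep : M.Indep (I ∪ K) := by
    rw [← dual_coindep_iff, coindep_iff_compl_spanning, dual_ground, hcompl]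
    have h2 : (U \ I) ∪ (M.E \ U) = M✶.E \ I := by
      ext x
      simp only [mem_union, mem_diff, dual_ground]
      constructor
      · rintro (⟨h1, h2⟩ | ⟨h1, h2⟩)
        · exact ⟨hU h1, h2⟩
        · exact ⟨h1, fun hi => h2 (hIU hi)⟩
      · rintro ⟨h1, h2⟩
        by_cases hxU : x ∈ U
        · exact Or.inl ⟨hxU, h2⟩
        · exact Or.inr ⟨h1, hxU⟩
    have hsp2 : M✶.Spanning (M✶.E \ I) := by
      rw [← coindep_iff_compl_spanning, dual_coindep_iff]
      exact hI.indep
    rw [spanning_iff_closure_eq (M := M✶) (hS := union_subset (diff_subset.trans hU) hJ.indep.subset_ground)]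
    have : M✶.closure ((U \ I) ∪ J) = M✶.closure ((U \ I) ∪ (M.E \ U)) := by
      rw [← closure_union_closure_right_eq, hJ.closure_eq_closure,
        closure_union_closure_right_eq]
    rw [this, h2, hsp2.closure_eq]
  exact hindep.isBase_of_spanning hspan

/-- for any matroid `M` on a finite set `S` and any `U ⊆ S`, one has
`M|U ⊕ M/U ≤ M ≤ M|U □ M/U` in the rank-preserving weak order on matroids on `S`. -/
theorem restriction_contraction_weak_order
    (M : Matroid α) (hE : M.E.Finite) (U : Set α) (hU : U ⊆ M.E)
    (hdis : Disjoint (M ↾ U).E (M.con U).E)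
    (F : Matroid α) (hF : IsFreeProduct (M ↾ U) (M.con U) F) :
    weakLE ((M ↾ U).disjointSum (M.con U) hdis) M ∧ weakLE M F := by
  have hground : (M ↾ U).E ∪ (M.con U).E = M.E := by
    rw [restrict_ground_eq, con_ground', union_diff_cancel hU]
  constructor
  · refine ⟨by rw [disjointSum_ground_eq, hground], fun B hB => ?_⟩
    rw [disjointSum_isBase_iff, restrict_ground_eq, con_ground'] at hB
    obtain ⟨h1, h2, h3⟩ := hB
    rw [isBase_restrict_iff hU] at h1
    rw [con_base_iff'] at h2
    have hBeq : (B ∩ U) ∪ (B ∩ (M.E \ U)) = B := by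
      rw [← inter_union_distrib_left, inter_eq_self_of_subset_left h3]
    have := base_union_of_basis_basis' hU h1 inter_subset_right h2.2
    rwa [hBeq] at this
  · refine ⟨by rw [hF.1, hground], fun B hB => ?_⟩
    rw [hF.2]
    obtain ⟨I, hI⟩ := M.exists_isBasis U hU
    obtain ⟨B₀, hB₀, hIB₀⟩ := hI.indep.exists_isBase_superset
    have hIeq : B₀ ∩ U = I :=
      (hI.eq_of_subset_indep (hB₀.indep.inter_right U)
        (subset_inter hIB₀ hI.subset) inter_subset_right).symm
    have hBasis₀ : M.IsBasis (B₀ ∩ U) U := hIeq ▸ hI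
    have hJbasis := hB₀.compl_inter_isBasis_of_inter_isBasis hBasis₀
    set K := B₀ \ U with hKdef
    have hKsub : K ⊆ M.E \ U := diff_subset_diff_left hB₀.subset_ground
    have hKset : (M.E \ U) \ K = (M.E \ B₀) ∩ (M.E \ U) := by
      ext x
      simp only [hKdef, mem_diff, mem_inter_iff]
      tauto
    have hKbase : (M.con U).IsBase K := con_base_iff'.mpr ⟨hKsub, hKset ▸ hJbasis⟩
    have hIbase : (M ↾ U).IsBase I := hI.isBase_restrict
    have hB₀eq : I ∪ K = B₀ := by
      rw [← hIeq, hKdef, inter_union_diff]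
    have hdisIK : Disjoint I K := by
      rw [hKdef]
      exact Set.disjoint_of_subset_left hI.subset disjoint_sdiff_right
    refine ⟨?_, ?_, ?_, ?_⟩
    · rw [hground]; exact hB.subset_ground
    · rw [erank_eq_of_base' hIbase, erank_eq_of_base' hKbase,
        ← encard_union_eq hdisIK, hB₀eq]
      exact hB.encard_eq_encard_of_isBase hB₀
    · rw [restrict_ground_eq, restrict_indep_iff]
      exact ⟨hB.indep.inter_right U, inter_subset_right⟩
    · have hsub : B ∩ (M.con U).E ⊆ (M.con U).E := inter_subset_right
      rw [spanning_iff_compl_coindep hsub, coindep_def,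
        show (M.con U)✶ = M✶ ↾ (M.E \ U) from dual_dual _, restrict_indep_iff]
      have hXeq : (M.con U).E \ (B ∩ (M.con U).E) = M.E \ (U ∪ B) := by
        ext x
        simp only [con_ground', mem_diff, mem_inter_iff, mem_union]
        tauto
      rw [hXeq]
      refine ⟨?_, diff_subset_diff_right subset_union_left⟩
      rw [← coindep_def, coindep_iff_compl_spanning,
        diff_diff_cancel_left (union_subset hU hB.subset_ground)]
      exact hB.spanning.union_right hU
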